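/- Let T > 0, let N be a positive integer with τ = T/N ≤ 1, let h > 0, and let D = diag(d_1,…,d_M) with all d_i > 0. Suppose vectors u^0 = φ, u^1, …, u^N ∈ ℝ^M and f^{1/2}, …, f^{N−1/2} ∈ ℝ^M satisfy, for n = 1,…,N, (u^n − u^{n−1})/τ = (1/(2h^α))·D·G_α·(u^{n−1} + u^n) + f^{n−1/2}. Then for every n = 1,…,N: ‖u^n‖²_{D⁻¹} ≤ exp(2T)·‖φ‖²_{D⁻¹} + (exp(2T) − 1)·max_{1≤k≤n} ‖f^{k−1/2}‖²_{D⁻¹}, where ‖w‖²_{D⁻¹} = h·wᵀD⁻¹w. -/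

import Mathlib

open Matrix

/-- The Grünwald–Letnikov coefficients `g_k^{(α)}`. -/
noncomputable def gcoef (α : ℝ) : ℕ → ℝ
  | 0 => 1
  | (k+1) => (1 - (α + 1) / (k + 1 : ℕ)) * gcoef α k

/-- The WSGD coefficients `w_k^{(α)}`. -/
noncomputable def wcoef (α : ℝ) : ℕ → ℝ
  | 0 => α / 2 * gcoef α 0
  | (k+1) => α / 2 * gcoef α (k+1) + (2 - α) / 2 * gcoef α k

/-- The `M × M` lower-Hessenberg Toeplitz matrix `G_α`. -/
noncomputable def Gmat (α : ℝ) (M : ℕ) : Matrix (Fin M) (Fin M) ℝ :=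
  Matrix.of fun i j => if (j : ℕ) ≤ (i : ℕ) + 1 then wcoef α ((i : ℕ) + 1 - (j : ℕ)) else 0

lemma gcoef_succ (α : ℝ) (k : ℕ) :
    gcoef α (k+1) = (1 - (α + 1) / ((k : ℝ) + 1)) * gcoef α k := by
  rw [gcoef]; push_cast; ring

lemma gcoef_zero (α : ℝ) : gcoef α 0 = 1 := rfl

lemma gcoef_one (α : ℝ) : gcoef α 1 = -α := by
  rw [gcoef_succ, gcoef_zero]; push_cast; ring

-- g^β_m < 0 for m ≥ 1, 0 < β < 1
lemma gcoef_neg {β : ℝ} (hβ0 : 0 < β) (hβ1 : β < 1) : ∀ m, 1 ≤ m → gcoef β m < 0 := by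
  intro m hm
  induction m with
  | zero => omega
  | succ k ih =>
    rcases Nat.eq_zero_or_pos k with rfl | hk
    · rw [gcoef_one]; linarith
    · 
      rw [gcoef_succ]
      have hfac : 0 < 1 - (β + 1) / ((k:ℝ)+1) := by
        rw [sub_pos, div_lt_one (by positivity)]
        have : (1:ℝ) ≤ (k:ℝ) := by exact_mod_cast hk
        linarith
      exact mul_neg_of_pos_of_neg hfac (ih hk)

-- g^α_m > 0 for m ≥ 2, 1 < α < 2
lemma gcoef_pos {α : ℝ} (hα0 : 1 < α) (hα1 : α < 2) : ∀ m, 2 ≤ m → 0 < gcoef α m := by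
  intro m hm
  induction m with
  | zero => omega
  | succ k ih =>
    rcases Nat.lt_or_ge k 2 with hk | hk
    · have : k = 1 := by omega
      subst this
      rw [gcoef_succ, gcoef_one]
      nlinarith
    · rw [gcoef_succ]
      have hfac : 0 < 1 - (α + 1) / ((k:ℝ)+1) := by
        rw [sub_pos, div_lt_one (by positivity)]
        have : (2:ℝ) ≤ (k:ℝ) := by exact_mod_cast hk
        linarith
      exact mul_pos hfac (ih hk)

-- Pascal-type identity
lemma gcoef_pascal (α : ℝ) : ∀ m, 1 ≤ m →
    gcoef α m = gcoef (α-1) m - gcoef (α-1) (m-1) := by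
  intro m hm
  induction m with
  | zero => omega
  | succ k ih =>
    rcases Nat.eq_zero_or_pos k with rfl | hk
    · simp [gcoef_one, gcoef_zero]
    · have hrec : ((k:ℝ)) * gcoef (α-1) k = ((k:ℝ) - α) * gcoef (α-1) (k-1) := by
        obtain ⟨j, rfl⟩ := Nat.exists_eq_add_of_le hk
        have : 1 + j - 1 = j := by omega
        rw [this]
        have h1 : (1 + j : ℕ) = j + 1 := by omega
        rw [h1, gcoef_succ]
        push_cast
        field_simp
        ring
      have hk1 : (k:ℝ) + 1 ≠ 0 := by positivity
      rw [gcoef_succ, ih hk, Nat.succ_sub_one]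
      rw [show gcoef (α-1) (k+1) = (1 - ((α-1) + 1) / ((k:ℝ)+1)) * gcoef (α-1) k from gcoef_succ _ _]
      field_simp
      nlinarith [hrec]

lemma wcoef_succ (α : ℝ) (k : ℕ) :
    wcoef α (k+1) = α / 2 * gcoef α (k+1) + (2 - α) / 2 * gcoef α k := rfl

lemma wcoef_zero (α : ℝ) : wcoef α 0 = α / 2 := by
  show α / 2 * gcoef α 0 = α / 2
  rw [gcoef_zero]; ring

lemma wcoef_one_neg {α : ℝ} (hα0 : 1 < α) (hα1 : α < 2) : wcoef α 1 ≤ 0 := by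
  rw [wcoef_succ, gcoef_one, gcoef_zero]; nlinarith

lemma wcoef_nonneg {α : ℝ} (hα0 : 1 < α) (hα1 : α < 2) (k : ℕ) (hk : 3 ≤ k) :
    0 ≤ wcoef α k := by
  obtain ⟨j, rfl⟩ := Nat.exists_eq_add_of_le hk
  rw [show 3 + j = (2 + j) + 1 by omega, wcoef_succ]
  have h1 := gcoef_pos hα0 hα1 (2+j+1) (by omega)
  have h2 := gcoef_pos hα0 hα1 (2+j) (by omega)
  nlinarith

lemma wcoef_02 {α : ℝ} (hα0 : 1 < α) (hα1 : α < 2) : 0 ≤ wcoef α 0 + wcoef α 2 := by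
  rw [wcoef_zero, show (2:ℕ) = 1 + 1 from rfl, wcoef_succ, gcoef_succ, gcoef_one]
  push_cast
  nlinarith [mul_pos (mul_pos (show (0:ℝ)<α by linarith) (show (0:ℝ)<α-1 by linarith)) (show (0:ℝ)<α+2 by linarith)]

noncomputable def Psum (α : ℝ) (m : ℕ) : ℝ := ∑ k ∈ Finset.range (m+1), wcoef α k

lemma Psum_formula (α : ℝ) : ∀ m, 1 ≤ m →
    Psum α m = α / 2 * gcoef (α-1) m + (2-α) / 2 * gcoef (α-1) (m-1) := by
  intro m hm
  induction m with
  | zero => omega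
  | succ k ih =>
    rcases Nat.eq_zero_or_pos k with rfl | hk
    · rw [Psum]
      rw [Finset.sum_range_succ, Finset.sum_range_one]
      rw [wcoef_zero, wcoef_succ, gcoef_one, gcoef_zero]
      simp [gcoef_one, gcoef_zero]
      ring
    · have hstep : Psum α (k+1) = Psum α k + wcoef α (k+1) := by
        rw [Psum, Finset.sum_range_succ]; rfl
      rw [hstep, ih hk, wcoef_succ, Nat.succ_sub_one,
        gcoef_pascal α (k+1) (by omega), Nat.succ_sub_one,
        gcoef_pascal α k hk]
      ring

lemma Psum_nonpos {α : ℝ} (hα0 : 1 < α) (hα1 : α < 2) (m : ℕ) (hm : 2 ≤ m) :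
    Psum α m ≤ 0 := by
  rw [Psum_formula α m (by omega)]
  have h1 := gcoef_neg (show (0:ℝ) < α - 1 by linarith) (by linarith) m (by omega)
  have h2 := gcoef_neg (show (0:ℝ) < α - 1 by linarith) (by linarith) (m-1) (by omega)
  nlinarith

-- sums over Icc needed for row sums
lemma sum_Icc_zero (α : ℝ) (m : ℕ) : ∑ k ∈ Finset.Icc 0 m, wcoef α k = Psum α m := by
  rw [Psum]
  congr 1
  ext x
  simp

lemma sum_Icc_one (α : ℝ) (m : ℕ) (hm : 1 ≤ m) :
    ∑ k ∈ Finset.Icc 1 m, wcoef α k = Psum α m - wcoef α 0 := by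
  have : Finset.Icc 0 m = insert 0 (Finset.Icc 1 m) := by
    ext x; simp [Finset.mem_Icc, Finset.mem_insert]; omega
  have h2 : ∑ k ∈ Finset.Icc 0 m, wcoef α k
      = wcoef α 0 + ∑ k ∈ Finset.Icc 1 m, wcoef α k := by
    rw [this, Finset.sum_insert (by simp)]
  rw [sum_Icc_zero] at h2
  linarith

noncomputable def wN (α : ℝ) (i j : ℕ) : ℝ := if j ≤ i + 1 then wcoef α (i+1-j) else 0

lemma rowA (α : ℝ) (M i : ℕ) (hi : i < M) :
    ∑ j ∈ Finset.range M, wN α i j = ∑ k ∈ Finset.Icc (i+2-M) (i+1), wcoef α k := by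
  rw [show (∑ j ∈ Finset.range M, wN α i j)
      = ∑ j ∈ (Finset.range M).filter (fun j => j ≤ i+1), wcoef α (i+1-j) from ?_]
  · exact Finset.sum_nbij' (fun j => i+1-j) (fun k => i+1-k)
      (by intro a ha; simp [Finset.mem_filter, Finset.mem_range] at ha ⊢; omega)
      (by intro a ha; simp [Finset.mem_Icc, Finset.mem_filter, Finset.mem_range] at ha ⊢; omega)
      (by intro a ha; simp [Finset.mem_filter, Finset.mem_range] at ha; omega)
      (by intro a ha; simp [Finset.mem_Icc] at ha; omega)
      (fun a _ => rfl)
  · rw [Finset.sum_filter]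
    apply Finset.sum_congr rfl
    intro j _
    rfl

lemma rowB (α : ℝ) (M i : ℕ) (hi : i < M) :
    ∑ j ∈ Finset.range M, wN α j i = ∑ k ∈ Finset.Icc (1-i) (M-i), wcoef α k := by
  rw [show (∑ j ∈ Finset.range M, wN α j i)
      = ∑ j ∈ (Finset.range M).filter (fun j => i ≤ j+1), wcoef α (j+1-i) from ?_]
  · exact Finset.sum_nbij' (fun j => j+1-i) (fun k => k+i-1)
      (by intro a ha; simp [Finset.mem_filter, Finset.mem_range] at ha ⊢; omega)
      (by intro a ha; simp [Finset.mem_Icc, Finset.mem_filter, Finset.mem_range] at ha ⊢; omega)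
      (by intro a ha; simp [Finset.mem_filter, Finset.mem_range] at ha; omega)
      (by intro a ha; simp [Finset.mem_Icc] at ha; omega)
      (fun a _ => rfl)
  · rw [Finset.sum_filter]
    apply Finset.sum_congr rfl
    intro j _
    rfl

lemma Psum_one (α : ℝ) : Psum α 1 = wcoef α 0 + wcoef α 1 := by
  rw [Psum, Finset.sum_range_succ, Finset.sum_range_one]

lemma sum_Icc_one_one (α : ℝ) : ∑ k ∈ Finset.Icc 1 1, wcoef α k = wcoef α 1 := by
  simp

lemma rowsum_nonpos {α : ℝ} (hα0 : 1 < α) (hα1 : α < 2) (M i : ℕ) (hi : i < M) :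
    (∑ j ∈ Finset.range M, wN α i j) + (∑ j ∈ Finset.range M, wN α j i) ≤ 0 := by
  rw [rowA α M i hi, rowB α M i hi]
  have hw1 := wcoef_one_neg hα0 hα1
  rcases Nat.lt_or_ge M 2 with hM | hM
  · -- M = 1, i = 0
    have hM1 : M = 1 := by omega
    have hi0 : i = 0 := by omega
    subst hM1; subst hi0
    norm_num
    linarith
  · rcases Nat.eq_zero_or_pos i with hi0 | hi1
    · subst hi0
      rw [show (0:ℕ)+2-M = 0 by omega, show (1:ℕ)-0 = 1 by omega, show M-0 = M by omega,
        sum_Icc_zero, sum_Icc_one α M (by omega), Psum_one]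
      have := Psum_nonpos hα0 hα1 M hM
      linarith
    · rcases Nat.eq_or_lt_of_le (show i+1 ≤ M by omega) with hiM | hiM
      · -- i = M - 1
        rw [show i+2-M = 1 by omega, show i+1 = M by omega, show 1-i = 0 by omega,
          show M - i = 1 by omega, sum_Icc_zero, sum_Icc_one α M (by omega), Psum_one]
        have := Psum_nonpos hα0 hα1 M hM
        linarith
      · -- 1 ≤ i ≤ M-2
        rw [show i+2-M = 0 by omega, show 1-i = 0 by omega, sum_Icc_zero, sum_Icc_zero]
        have h1 := Psum_nonpos hα0 hα1 (i+1) (by omega)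
        have h2 := Psum_nonpos hα0 hα1 (M-i) (by omega)
        linarith

lemma wN_symm_nonneg {α : ℝ} (hα0 : 1 < α) (hα1 : α < 2) (i j : ℕ) (hij : i ≠ j) :
    0 ≤ wN α i j + wN α j i := by
  have key : ∀ a b : ℕ, a < b → 0 ≤ wN α a b + wN α b a := by
    intro a b hab
    unfold wN
    rcases Nat.eq_or_lt_of_le (show a+1 ≤ b by omega) with h1 | h1
    · rw [if_pos (by omega), if_pos (by omega), show a+1-b = 0 by omega,
        show b+1-a = 2 by omega]
      exact wcoef_02 hα0 hα1
    · rw [if_neg (by omega), if_pos (by omega)]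
      have := wcoef_nonneg hα0 hα1 (b+1-a) (by omega)
      linarith
  rcases Nat.lt_or_ge i j with hl | hl
  · exact key i j hl
  · have := key j i (by omega); linarith

lemma quad_form_nonpos {M : ℕ} (A : Matrix (Fin M) (Fin M) ℝ)
    (hoff : ∀ i j : Fin M, i ≠ j → 0 ≤ A i j + A j i)
    (hrow : ∀ i : Fin M, (∑ j, (A i j + A j i)) ≤ 0)
    (v : Fin M → ℝ) : v ⬝ᵥ (A *ᵥ v) ≤ 0 := by
  have base : v ⬝ᵥ (A *ᵥ v) = ∑ i, ∑ j, A i j * (v i * v j) := by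
    simp only [dotProduct, Matrix.mulVec, Finset.mul_sum]
    apply Finset.sum_congr rfl; intros; apply Finset.sum_congr rfl; intros; ring
  have base2 : v ⬝ᵥ (A *ᵥ v) = ∑ i, ∑ j, A j i * (v i * v j) := by
    rw [base, Finset.sum_comm]
    apply Finset.sum_congr rfl; intros; apply Finset.sum_congr rfl; intros; ring
  have e1 : 2 * (v ⬝ᵥ (A *ᵥ v)) = ∑ i, ∑ j, (A i j + A j i) * (v i * v j) := by
    rw [two_mul]; nth_rewrite 1 [base]; rw [base2, ← Finset.sum_add_distrib]
    apply Finset.sum_congr rfl; intros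
    rw [← Finset.sum_add_distrib]
    apply Finset.sum_congr rfl; intros; ring
  have e2 : ∑ i, ∑ j, (A i j + A j i) * (v i * v j)
      ≤ ∑ i, ∑ j, (A i j + A j i) * ((v i^2 + v j^2)/2) := by
    apply Finset.sum_le_sum; intro i _; apply Finset.sum_le_sum; intro j _
    rcases eq_or_ne i j with rfl | hij
    · apply le_of_eq; ring
    · have h1 := hoff i j hij
      nlinarith [sq_nonneg (v i - v j)]
  have e3 : ∑ i, ∑ j, (A i j + A j i) * ((v i^2 + v j^2)/2)
      = ∑ i : Fin M, (∑ j, (A i j + A j i)) * v i^2 := by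
    have s1 : ∑ i, ∑ j, (A i j + A j i) * ((v i^2 + v j^2)/2)
        = (∑ i, ∑ j, (A i j + A j i) * (v i^2/2))
          + (∑ i, ∑ j, (A i j + A j i) * (v j^2/2)) := by
      rw [← Finset.sum_add_distrib]
      apply Finset.sum_congr rfl; intros
      rw [← Finset.sum_add_distrib]
      apply Finset.sum_congr rfl; intros; ring
    have s2 : (∑ i, ∑ j, (A i j + A j i) * (v j^2/2))
        = (∑ i, ∑ j, (A i j + A j i) * (v i^2/2)) := by
      rw [Finset.sum_comm]
      apply Finset.sum_congr rfl; intros; apply Finset.sum_congr rfl; intros; ring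
    rw [s1, s2]
    rw [← Finset.sum_add_distrib]
    apply Finset.sum_congr rfl; intros
    rw [Finset.sum_mul, ← Finset.sum_add_distrib]
    apply Finset.sum_congr rfl; intros; ring
  have e4 : ∑ i : Fin M, (∑ j, (A i j + A j i)) * v i^2 ≤ 0 := by
    apply Finset.sum_nonpos
    intro i _
    exact mul_nonpos_of_nonpos_of_nonneg (hrow i) (sq_nonneg _)
  nlinarith [e1, e2, e3, e4]

lemma Gmat_quad_nonpos {α : ℝ} (hα0 : 1 < α) (hα1 : α < 2) (M : ℕ) (v : Fin M → ℝ) :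
    v ⬝ᵥ (Gmat α M *ᵥ v) ≤ 0 := by
  apply quad_form_nonpos
  · intro i j hij
    show 0 ≤ wN α i j + wN α j i
    exact wN_symm_nonneg hα0 hα1 i j (fun hc => hij (Fin.ext hc))
  · intro i
    have hconv : (∑ j : Fin M, (Gmat α M i j + Gmat α M j i))
        = ∑ j ∈ Finset.range M, (wN α i j + wN α j i) := by
      rw [← Fin.sum_univ_eq_sum_range (fun j => wN α (i:ℕ) j + wN α j (i:ℕ)) M]
      rfl
    rw [hconv, Finset.sum_add_distrib]
    exact rowsum_nonpos hα0 hα1 M i i.isLt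


/-- Unconditional stability (Theorem 2.1): for the Crank–Nicolson/WSGD scheme
`(uⁿ − uⁿ⁻¹)/τ = (1/(2hᵅ)) D G_α (uⁿ⁻¹ + uⁿ) + fⁿ⁻¹ᐟ²` with `τ = T/N ≤ 1`,
`‖uⁿ‖²_{D⁻¹} ≤ e^{2T} ‖φ‖²_{D⁻¹} + (e^{2T} − 1) max_{1≤k≤n} ‖fᵏ⁻¹ᐟ²‖²_{D⁻¹}`,
where `‖w‖²_{D⁻¹} = h wᵀ D⁻¹ w` and `f k` stands for `f^{k−1/2}`. -/
theorem CN_scheme_stability (α T : ℝ) (hα : α ∈ Set.Ioo (1 : ℝ) 2) (hT : 0 < T)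
    (N M : ℕ) (hN : 0 < N) (hM : 0 < M) (hτ : T / N ≤ 1)
    (h : ℝ) (hh : 0 < h) (d : Fin M → ℝ) (hd : ∀ i, 0 < d i)
    (u f : ℕ → Fin M → ℝ) (φ : Fin M → ℝ) (hu0 : u 0 = φ)
    (heq : ∀ n, 1 ≤ n → n ≤ N →
      (1 / (T / N)) • (u n - u (n - 1)) =
        (1 / (2 * h ^ α)) • (Matrix.diagonal d *ᵥ (Gmat α M *ᵥ (u (n - 1) + u n))) + f n) :
    ∀ n, ∀ hn1 : 1 ≤ n, n ≤ N →
      h * (u n ⬝ᵥ (Matrix.diagonal (fun i => (d i)⁻¹) *ᵥ u n)) ≤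
        Real.exp (2 * T) * (h * (φ ⬝ᵥ (Matrix.diagonal (fun i => (d i)⁻¹) *ᵥ φ))) +
        (Real.exp (2 * T) - 1) *
          (Finset.Icc 1 n).sup' (Finset.nonempty_Icc.mpr hn1)
            (fun k => h * (f k ⬝ᵥ (Matrix.diagonal (fun i => (d i)⁻¹) *ᵥ f k))) := by
  obtain ⟨hα0, hα1⟩ := hα
  have hNR : (0:ℝ) < (N:ℝ) := by exact_mod_cast hN
  set τ : ℝ := T / N with hτdef
  have hτpos : 0 < τ := div_pos hT hNR
  have h2mτ : (0:ℝ) < 2 - τ := by linarith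
  -- inner product
  set Di : Matrix (Fin M) (Fin M) ℝ := Matrix.diagonal (fun i => (d i)⁻¹) with hDidef
  have ip_expand : ∀ a b : Fin M → ℝ,
      a ⬝ᵥ (Di *ᵥ b) = ∑ i, a i * ((d i)⁻¹ * b i) := by
    intro a b
    simp [hDidef, dotProduct, Matrix.mulVec_diagonal]
  have ip_nonneg : ∀ a : Fin M → ℝ, 0 ≤ a ⬝ᵥ (Di *ᵥ a) := by
    intro a
    rw [ip_expand]
    apply Finset.sum_nonneg
    intro i _
    have h1 : (0:ℝ) < (d i)⁻¹ := inv_pos.mpr (hd i)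
    nlinarith [sq_nonneg (a i)]
  have ip_cs : ∀ a b : Fin M → ℝ,
      2 * (a ⬝ᵥ (Di *ᵥ b)) ≤ a ⬝ᵥ (Di *ᵥ a) + b ⬝ᵥ (Di *ᵥ b) := by
    intro a b
    rw [ip_expand, ip_expand, ip_expand, Finset.mul_sum, ← Finset.sum_add_distrib]
    apply Finset.sum_le_sum
    intro i _
    have h1 : (0:ℝ) < (d i)⁻¹ := inv_pos.mpr (hd i)
    nlinarith [sq_nonneg (a i - b i)]
  -- key one-step inequality (without h factor)
  have key : ∀ n, 1 ≤ n → n ≤ N →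
      (2 - τ) * (u n ⬝ᵥ (Di *ᵥ u n)) ≤
        (2 + τ) * (u (n-1) ⬝ᵥ (Di *ᵥ u (n-1))) + 2 * τ * (f n ⬝ᵥ (Di *ᵥ f n)) := by
    intro n h1 h2
    have E := heq n h1 h2
    set x : Fin M → ℝ := u (n-1) + u n with hxdef
    have E2 : x ⬝ᵥ (Di *ᵥ ((1 / τ) • (u n - u (n-1)))) =
        x ⬝ᵥ (Di *ᵥ ((1 / (2 * h ^ α)) • (Matrix.diagonal d *ᵥ (Gmat α M *ᵥ x)) + f n)) := by
      rw [E]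
    -- expand LHS
    have hLHS : x ⬝ᵥ (Di *ᵥ ((1 / τ) • (u n - u (n-1)))) =
        (1/τ) * ((u n ⬝ᵥ (Di *ᵥ u n)) - (u (n-1) ⬝ᵥ (Di *ᵥ u (n-1)))) := by
      rw [ip_expand, ip_expand, ip_expand, ← Finset.sum_sub_distrib, Finset.mul_sum]
      apply Finset.sum_congr rfl
      intro i _
      simp only [hxdef, Pi.add_apply, Pi.smul_apply, Pi.sub_apply, smul_eq_mul]
      ring
    -- expand RHS
    have hG : Di *ᵥ (Matrix.diagonal d *ᵥ (Gmat α M *ᵥ x)) = Gmat α M *ᵥ x := by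
      funext i
      simp only [hDidef, Matrix.mulVec_diagonal]
      exact inv_mul_cancel_left₀ (hd i).ne' _
    have hRHS : x ⬝ᵥ (Di *ᵥ ((1 / (2 * h ^ α)) • (Matrix.diagonal d *ᵥ (Gmat α M *ᵥ x)) + f n)) =
        (1 / (2 * h ^ α)) * (x ⬝ᵥ (Gmat α M *ᵥ x)) + x ⬝ᵥ (Di *ᵥ f n) := by
      rw [Matrix.mulVec_add, Matrix.mulVec_smul, dotProduct_add, dotProduct_smul,
        hG]
      rfl
    have hquad : x ⬝ᵥ (Gmat α M *ᵥ x) ≤ 0 := Gmat_quad_nonpos hα0 hα1 M x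
    have hhα : (0:ℝ) < h ^ α := Real.rpow_pos_of_pos hh α
    have hfrac : (0:ℝ) < 1 / (2 * h ^ α) := by positivity
    have hterm : x ⬝ᵥ (Di *ᵥ ((1 / (2 * h ^ α)) • (Matrix.diagonal d *ᵥ (Gmat α M *ᵥ x)) + f n))
        ≤ x ⬝ᵥ (Di *ᵥ f n) := by
      rw [hRHS]
      nlinarith [mul_nonpos_of_nonneg_of_nonpos hfrac.le hquad]
    -- bound the f-term
    have hx_f : x ⬝ᵥ (Di *ᵥ f n) =
        (u (n-1)) ⬝ᵥ (Di *ᵥ f n) + (u n) ⬝ᵥ (Di *ᵥ f n) := by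
      rw [ip_expand, ip_expand, ip_expand, ← Finset.sum_add_distrib]
      apply Finset.sum_congr rfl
      intro i _
      simp only [hxdef, Pi.add_apply]
      ring
    have hcs1 := ip_cs (u (n-1)) (f n)
    have hcs2 := ip_cs (u n) (f n)
    have hfinal : (1/τ) * ((u n ⬝ᵥ (Di *ᵥ u n)) - (u (n-1) ⬝ᵥ (Di *ᵥ u (n-1)))) ≤
        ((u (n-1) ⬝ᵥ (Di *ᵥ u (n-1))) + (u n ⬝ᵥ (Di *ᵥ u n))) / 2 + (f n ⬝ᵥ (Di *ᵥ f n)) := by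
      rw [← hLHS, E2]
      calc _ ≤ x ⬝ᵥ (Di *ᵥ f n) := hterm
        _ = (u (n-1)) ⬝ᵥ (Di *ᵥ f n) + (u n) ⬝ᵥ (Di *ᵥ f n) := hx_f
        _ ≤ _ := by linarith
    have := mul_le_mul_of_nonneg_left hfinal (le_of_lt (mul_pos two_pos hτpos))
    have hτne : τ ≠ 0 := ne_of_gt hτpos
    have hexp : 2 * τ * ((1/τ) * ((u n ⬝ᵥ (Di *ᵥ u n)) - (u (n-1) ⬝ᵥ (Di *ᵥ u (n-1))))) =
        2 * ((u n ⬝ᵥ (Di *ᵥ u n)) - (u (n-1) ⬝ᵥ (Di *ᵥ u (n-1)))) := by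
      field_simp
    rw [hexp] at this
    linarith
  -- recursion in divided form
  obtain ⟨r, hrdef⟩ : ∃ r : ℝ, r = (2 + τ) / (2 - τ) := ⟨_, rfl⟩
  have hr1 : (1:ℝ) ≤ r := by
    rw [hrdef, le_div_iff₀ h2mτ]; linarith
  have hr0 : (0:ℝ) ≤ r := by linarith
  set Ff : ℕ → ℝ := fun k => h * (f k ⬝ᵥ (Di *ᵥ f k)) with hFfdef
  set Qf : ℕ → ℝ := fun m => h * (u m ⬝ᵥ (Di *ᵥ u m)) with hQfdef
  have Ffnn : ∀ k, 0 ≤ Ff k := fun k => mul_nonneg hh.le (ip_nonneg _)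
  have Qfnn : ∀ m, 0 ≤ Qf m := fun m => mul_nonneg hh.le (ip_nonneg _)
  have step : ∀ n, 1 ≤ n → n ≤ N → Qf n ≤ r * Qf (n-1) + (r - 1) * Ff n := by
    intro n h1 h2
    have k := key n h1 h2
    have k2 : (2 - τ) * Qf n ≤ (2 + τ) * Qf (n-1) + 2 * τ * Ff n := by
      simp only [hQfdef, hFfdef]
      nlinarith [mul_le_mul_of_nonneg_left k hh.le]
    have hdiv : Qf n ≤ ((2 + τ) * Qf (n-1) + 2 * τ * Ff n) / (2 - τ) := by
      rw [le_div_iff₀ h2mτ]; linarith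
    calc Qf n ≤ _ := hdiv
      _ = r * Qf (n-1) + (r - 1) * Ff n := by
        have hr2 : r * (2 - τ) = 2 + τ := by
          rw [hrdef]; field_simp
        rw [div_eq_iff h2mτ.ne']
        linear_combination (-1 : ℝ) * (Qf (n-1) + Ff n) * hr2
  have main : ∀ n, (hn1 : 1 ≤ n) → n ≤ N →
      Qf n ≤ r^n * Qf 0 +
        (r^n - 1) * (Finset.Icc 1 n).sup' (Finset.nonempty_Icc.mpr hn1) Ff := by
    intro n
    induction n with
    | zero => omega
    | succ m ih =>
      intro h1 h2
      have hs : Qf (m+1) ≤ r * Qf m + (r - 1) * Ff (m+1) := by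
        simpa using step (m+1) (by omega) h2
      have hFle : Ff (m+1) ≤ (Finset.Icc 1 (m+1)).sup'
          (Finset.nonempty_Icc.mpr (by omega)) Ff :=
        Finset.le_sup' Ff (Finset.mem_Icc.mpr ⟨by omega, le_refl _⟩)
      have hSnn : 0 ≤ (Finset.Icc 1 (m+1)).sup' (Finset.nonempty_Icc.mpr (by omega)) Ff :=
        le_trans (Ffnn (m+1)) hFle
      rcases Nat.eq_zero_or_pos m with rfl | hm
      · have hI : (Finset.Icc 1 1).sup' (Finset.nonempty_Icc.mpr (by omega)) Ff = Ff 1 := by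
          simp
        rw [hI, pow_one]
        calc Qf 1 ≤ r * Qf 0 + (r - 1) * Ff 1 := hs
          _ = r * Qf 0 + (r - 1) * Ff 1 := rfl
      · have ihm := ih hm (by omega)
        have hmono : (Finset.Icc 1 m).sup' (Finset.nonempty_Icc.mpr hm) Ff ≤
            (Finset.Icc 1 (m+1)).sup' (Finset.nonempty_Icc.mpr (by omega)) Ff := by
          apply Finset.sup'_mono Ff (Finset.Icc_subset_Icc_right (by omega))
        have hrm : (1:ℝ) ≤ r^m := one_le_pow₀ hr1
        have hSmnn : 0 ≤ (Finset.Icc 1 m).sup' (Finset.nonempty_Icc.mpr hm) Ff :=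
          le_trans (Ffnn m) (Finset.le_sup' Ff (Finset.mem_Icc.mpr ⟨hm, le_refl _⟩))
        calc Qf (m+1) ≤ r * Qf m + (r - 1) * Ff (m+1) := hs
          _ ≤ r * (r^m * Qf 0 + (r^m - 1) *
                (Finset.Icc 1 m).sup' (Finset.nonempty_Icc.mpr hm) Ff)
              + (r - 1) * ((Finset.Icc 1 (m+1)).sup'
                (Finset.nonempty_Icc.mpr (by omega)) Ff) := by
            apply add_le_add
            · exact mul_le_mul_of_nonneg_left ihm hr0
            · exact mul_le_mul_of_nonneg_left hFle (by linarith)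
          _ ≤ r * (r^m * Qf 0 + (r^m - 1) *
                (Finset.Icc 1 (m+1)).sup' (Finset.nonempty_Icc.mpr (by omega)) Ff)
              + (r - 1) * ((Finset.Icc 1 (m+1)).sup'
                (Finset.nonempty_Icc.mpr (by omega)) Ff) := by
            have h3 : (r^m - 1) * (Finset.Icc 1 m).sup' (Finset.nonempty_Icc.mpr hm) Ff ≤
                (r^m - 1) * (Finset.Icc 1 (m+1)).sup'
                  (Finset.nonempty_Icc.mpr (by omega)) Ff :=
              mul_le_mul_of_nonneg_left hmono (by linarith)
            have h4 := mul_le_mul_of_nonneg_left (add_le_add_left h3 (r^m * Qf 0)) hr0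
            linarith [h4]
          _ = r^(m+1) * Qf 0 + (r^(m+1) - 1) * ((Finset.Icc 1 (m+1)).sup'
                (Finset.nonempty_Icc.mpr (by omega)) Ff) := by ring
  -- conclusion
  intro n hn1 hn2
  have hmain := main n hn1 hn2
  have hτN : τ * N = T := div_mul_cancel₀ T hNR.ne'
  have hrexp : r ≤ Real.exp (2*τ) := by
    have hA : r ≤ 1 + 2*τ := by
      rw [hrdef, div_le_iff₀ h2mτ]; nlinarith
    have hB : 2*τ + 1 ≤ Real.exp (2*τ) := Real.add_one_le_exp _
    linarith
  have hrn : r^n ≤ Real.exp (2*T) := by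
    calc r^n ≤ (Real.exp (2*τ))^n := pow_le_pow_left₀ hr0 hrexp n
      _ = Real.exp ((n:ℝ) * (2*τ)) := (Real.exp_nat_mul _ n).symm
      _ ≤ Real.exp (2*T) := by
        apply Real.exp_le_exp.mpr
        have hcast : (n:ℝ) ≤ (N:ℝ) := by exact_mod_cast hn2
        nlinarith
  have h1n : (1:ℝ) ≤ r^n := one_le_pow₀ hr1
  have hS : 0 ≤ (Finset.Icc 1 n).sup' (Finset.nonempty_Icc.mpr hn1) Ff :=
    le_trans (Ffnn n) (Finset.le_sup' Ff (Finset.mem_Icc.mpr ⟨hn1, le_refl _⟩))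
  have final : Qf n ≤ Real.exp (2*T) * Qf 0 + (Real.exp (2*T) - 1) *
      (Finset.Icc 1 n).sup' (Finset.nonempty_Icc.mpr hn1) Ff := by
    nlinarith [mul_le_mul_of_nonneg_right hrn (Qfnn 0),
      mul_le_mul_of_nonneg_right hrn hS, hmain]
  simpa only [hQfdef, hFfdef, hu0] using final
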